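/- For r ≥ 2 and r + 3 ≤ n ≤ 2r, every K_{r+1}-free graph on n vertices with at least t(n,r) - 1 edges is r-colourable. -/

import Mathlib

open Finset
attribute [local instance] Classical.propDecidable
set_option linter.unusedSectionVars false
set_option maxHeartbeats 1000000
namespace TuranNE

variable {V : Type*} [Fintype V] [DecidableEq V]

noncomputable def ew (H : SimpleGraph V) (A : Finset V) : Finset (Sym2 V) :=
  H.edgeFinset.filter (fun e => ∀ v ∈ e, v ∈ A)

def indep (H : SimpleGraph V) (I : Finset V) : Prop :=
  ∀ u ∈ I, ∀ v ∈ I, ¬H.Adj u v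

variable {H : SimpleGraph V}

lemma mem_ew {A : Finset V} {x y : V} :
    s(x, y) ∈ ew H A ↔ H.Adj x y ∧ x ∈ A ∧ y ∈ A := by
  simp [ew, SimpleGraph.mem_edgeFinset, Sym2.mem_iff, forall_eq_or_imp]

lemma ew_mono {A B : Finset V} (h : A ⊆ B) : ew H A ⊆ ew H B := by
  intro e he
  simp only [ew, mem_filter] at he ⊢
  exact ⟨he.1, fun v hv => h (he.2 v hv)⟩

lemma indep_mono {I J : Finset V} (h : J ⊆ I) (hI : indep H I) : indep H J :=
  fun u hu v hv => hI u (h hu) v (h hv)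

lemma indep_insert {I : Finset V} {x : V} (hI : indep H I)
    (hx : ∀ u ∈ I, ¬H.Adj x u) : indep H (insert x I) := by
  intro u hu v hv
  rcases mem_insert.1 hu with h1 | h1
  · rcases mem_insert.1 hv with h2 | h2
    · subst h1; subst h2; exact fun h => H.irrefl h
    · subst h1; exact hx v h2
  · rcases mem_insert.1 hv with h2 | h2
    · subst h2; exact fun h => hx u h1 h.symm
    · exact hI u h1 v h2

lemma key_count (S A : Finset V) (hS : S ⊆ A) :
    (∑ t ∈ A \ S, (S.filter (H.Adj t)).card) + (ew H (A \ S)).card ≤ (ew H A).card := by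
  set T := A \ S with hT
  have hTS : ∀ x ∈ T, x ∉ S := fun x hx => (mem_sdiff.1 hx).2
  have hTA : T ⊆ A := sdiff_subset
  set B : Finset (Sym2 V) :=
    T.biUnion (fun t => (S.filter (H.Adj t)).image (fun s => s(t, s))) with hB
  have hBcard : B.card = ∑ t ∈ T, (S.filter (H.Adj t)).card := by
    rw [hB, card_biUnion]
    · refine Finset.sum_congr rfl (fun t ht => ?_)
      rw [card_image_of_injOn]
      intro s1 h1 s2 h2 hheq
      rcases Sym2.eq_iff.1 hheq with ⟨-, h⟩ | ⟨h1', h2'⟩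
      · exact h
      · exact absurd ((mem_filter.1 h1).1) (h2' ▸ hTS t ht)
    · intro t1 h1 t2 h2 hne
      unfold Function.onFun
      rw [Finset.disjoint_left]
      intro e he1 he2
      simp only [mem_image, mem_filter] at he1 he2
      obtain ⟨s1, hs1, rfl⟩ := he1
      obtain ⟨s2, hs2, hheq⟩ := he2
      rcases Sym2.eq_iff.1 hheq.symm with ⟨h, -⟩ | ⟨h1', h2'⟩
      · exact hne h
      · exact hTS t2 h2 (h2' ▸ hs1.1)
  have hBsub : B ⊆ ew H A := by
    intro e he
    simp only [hB, mem_biUnion, mem_image, mem_filter] at he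
    obtain ⟨t, ht, s, hs, rfl⟩ := he
    exact mem_ew.2 ⟨hs.2, hTA ht, hS hs.1⟩
  have hTsub : ew H T ⊆ ew H A := ew_mono hTA
  have hdisj : Disjoint B (ew H T) := by
    rw [Finset.disjoint_left]
    intro e he1 he2
    simp only [hB, mem_biUnion, mem_image, mem_filter] at he1
    obtain ⟨t, ht, s, hs, rfl⟩ := he1
    simp only [ew, mem_filter] at he2
    exact hTS s (he2.2 s (by simp [Sym2.mem_iff])) hs.1
  calc (∑ t ∈ T, (S.filter (H.Adj t)).card) + (ew H T).card
      = B.card + (ew H T).card := by rw [hBcard]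
    _ = (B ∪ ew H T).card := (card_union_of_disjoint hdisj).symm
    _ ≤ (ew H A).card := card_le_card (union_subset hBsub hTsub)

lemma buildMatching (A S : Finset V) (hS : S ⊆ A) (g : V → V)
    (hg1 : ∀ t ∈ A \ S, g t ∈ S) (hg2 : ∀ t ∈ A \ S, H.Adj t (g t))
    (hginj : ∀ t1 ∈ A \ S, ∀ t2 ∈ A \ S, g t1 = g t2 → t1 = t2) :
    ∃ P : Finset (Finset V), P.card ≤ S.card ∧ (∀ c ∈ P, H.IsClique (c : Set V)) ∧
      ∀ v ∈ A, ∃ c ∈ P, v ∈ c := by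
  set T := A \ S with hT
  refine ⟨T.image (fun t => ({t, g t} : Finset V)) ∪
    (S \ T.image g).image (fun s => ({s} : Finset V)), ?_, ?_, ?_⟩
  · have h1 : (T.image g).card = T.card := card_image_of_injOn hginj
    have h2 : T.image g ⊆ S := by
      intro s hs; obtain ⟨t, ht, rfl⟩ := mem_image.1 hs; exact hg1 t ht
    have h3 : ((S \ T.image g).image (fun s => ({s} : Finset V))).card ≤ S.card - T.card := by
      calc _ ≤ (S \ T.image g).card := card_image_le
        _ = S.card - T.card := by rw [card_sdiff_of_subset h2, h1]
    have h4 : (T.image (fun t => ({t, g t} : Finset V))).card ≤ T.card := card_image_le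
    have h5 : T.card ≤ S.card := h1 ▸ card_le_card h2
    calc _ ≤ _ + _ := card_union_le _ _
      _ ≤ T.card + (S.card - T.card) := Nat.add_le_add h4 h3
      _ = S.card := by omega
  · intro c hc
    rcases mem_union.1 hc with hc | hc
    · obtain ⟨t, ht, rfl⟩ := mem_image.1 hc
      have : H.Adj t (g t) := hg2 t ht
      simp only [coe_insert, coe_singleton]
      exact SimpleGraph.isClique_pair.2 (fun _ => this)
    · obtain ⟨s, hs, rfl⟩ := mem_image.1 hc
      simp only [coe_singleton]
      exact Set.pairwise_singleton _ _
  · intro v hv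
    by_cases hvS : v ∈ S
    · by_cases hvI : v ∈ T.image g
      · obtain ⟨t, ht, rfl⟩ := mem_image.1 hvI
        exact ⟨{t, g t}, mem_union_left _ (mem_image_of_mem _ ht), by simp⟩
      · exact ⟨{v}, mem_union_right _ (mem_image_of_mem _ (mem_sdiff.2 ⟨hvS, hvI⟩)), by simp⟩
    · have hvT : v ∈ T := mem_sdiff.2 ⟨hv, hvS⟩
      exact ⟨{v, g v}, mem_union_left _ (mem_image_of_mem _ hvT), by simp⟩

lemma swap1 (A S : Finset V) (hSA : S ⊆ A) (hSind : indep H S)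
    (hmax : ∀ I ⊆ A, indep H I → I.card ≤ S.card)
    {t1 t2 s : V} (ht1 : t1 ∈ A \ S) (ht2 : t2 ∈ A \ S) (hne : t1 ≠ t2) (hs : s ∈ S)
    (hnadj : ¬H.Adj t1 t2)
    (h1 : ∀ u ∈ S, H.Adj t1 u → u = s) (h2 : ∀ u ∈ S, H.Adj t2 u → u = s) : False := by
  set S' := insert t1 (insert t2 (S.erase s)) with hS'
  have hind' : indep H S' := by
    refine indep_insert (indep_insert (indep_mono (erase_subset s S) hSind) ?_) ?_
    · intro u hu hadj
      exact (ne_of_mem_erase hu) (h2 u (mem_of_mem_erase hu) hadj)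
    · intro u hu hadj
      rcases mem_insert.1 hu with h | h
      · subst h; exact hnadj hadj
      · exact (ne_of_mem_erase h) (h1 u (mem_of_mem_erase h) hadj)
  have hsub : S' ⊆ A := by
    refine insert_subset (mem_sdiff.1 ht1).1 (insert_subset (mem_sdiff.1 ht2).1 ?_)
    exact (erase_subset s S).trans hSA
  have hcard : S'.card = S.card + 1 := by
    rw [hS', card_insert_of_notMem, card_insert_of_notMem, card_erase_of_mem hs]
    · have : 1 ≤ S.card := card_pos.2 ⟨s, hs⟩
      omega
    · intro h; exact (mem_sdiff.1 ht2).2 (erase_subset s S h)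
    · intro h
      rcases mem_insert.1 h with h | h
      · exact hne h
      · exact (mem_sdiff.1 ht1).2 (erase_subset s S h)
  have := hmax S' hsub hind'
  omega

lemma swap2 (A S : Finset V) (hSA : S ⊆ A) (hSind : indep H S)
    (hmax : ∀ I ⊆ A, indep H I → I.card ≤ S.card)
    {t1 t2 t3 s1 s2 : V} (ht1 : t1 ∈ A \ S) (ht2 : t2 ∈ A \ S) (ht3 : t3 ∈ A \ S)
    (h12 : t1 ≠ t2) (h13 : t1 ≠ t3) (h23 : t2 ≠ t3)
    (hs1 : s1 ∈ S) (hs2 : s2 ∈ S) (hss : s1 ≠ s2)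
    (hnadj : ∀ u ∈ A \ S, ∀ v ∈ A \ S, ¬H.Adj u v)
    (hn1 : ∀ u ∈ S, H.Adj t1 u → u = s1)
    (hn2 : ∀ u ∈ S, H.Adj t2 u → u = s2)
    (hn3 : ∀ u ∈ S, H.Adj t3 u → u = s1 ∨ u = s2) : False := by
  set S' := insert t1 (insert t2 (insert t3 ((S.erase s1).erase s2))) with hS'
  have hsubS : (S.erase s1).erase s2 ⊆ S := (erase_subset _ _).trans (erase_subset _ _)
  have hmem : ∀ u ∈ (S.erase s1).erase s2, u ≠ s1 ∧ u ≠ s2 ∧ u ∈ S := by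
    intro u hu
    have h2 := ne_of_mem_erase hu
    have h1' := mem_of_mem_erase hu
    exact ⟨ne_of_mem_erase h1', h2, mem_of_mem_erase h1'⟩
  have hind' : indep H S' := by
    refine indep_insert (indep_insert (indep_insert (indep_mono hsubS hSind) ?_) ?_) ?_
    · intro u hu hadj
      obtain ⟨hu1, hu2, huS⟩ := hmem u hu
      rcases hn3 u huS hadj with h | h
      · exact hu1 h
      · exact hu2 h
    · intro u hu hadj
      rcases mem_insert.1 hu with h | h
      · exact hnadj t2 ht2 u (h ▸ ht3) hadj
      · obtain ⟨hu1, hu2, huS⟩ := hmem u h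
        exact hu2 (hn2 u huS hadj)
    · intro u hu hadj
      rcases mem_insert.1 hu with h | h
      · exact hnadj t1 ht1 u (h ▸ ht2) hadj
      · rcases mem_insert.1 h with h' | h'
        · exact hnadj t1 ht1 u (h' ▸ ht3) hadj
        · obtain ⟨hu1, hu2, huS⟩ := hmem u h'
          exact hu1 (hn1 u huS hadj)
  have hsub : S' ⊆ A := by
    refine insert_subset (mem_sdiff.1 ht1).1 (insert_subset (mem_sdiff.1 ht2).1
      (insert_subset (mem_sdiff.1 ht3).1 (hsubS.trans hSA)))
  have hs2' : s2 ∈ S.erase s1 := mem_erase.2 ⟨hss.symm, hs2⟩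
  have hcard : S'.card = S.card + 1 := by
    have hnm3 : t3 ∉ (S.erase s1).erase s2 := fun h => (mem_sdiff.1 ht3).2 (hsubS h)
    have hnm2 : t2 ∉ insert t3 ((S.erase s1).erase s2) := by
      intro h
      rcases mem_insert.1 h with h | h
      · exact h23 h
      · exact (mem_sdiff.1 ht2).2 (hsubS h)
    have hnm1 : t1 ∉ insert t2 (insert t3 ((S.erase s1).erase s2)) := by
      intro h
      rcases mem_insert.1 h with h | h
      · exact h12 h
      · rcases mem_insert.1 h with h' | h'
        · exact h13 h'
        · exact (mem_sdiff.1 ht1).2 (hsubS h')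
    rw [hS', card_insert_of_notMem hnm1, card_insert_of_notMem hnm2,
      card_insert_of_notMem hnm3, card_erase_of_mem hs2', card_erase_of_mem hs1]
    have h1 : 1 ≤ S.card := card_pos.2 ⟨s1, hs1⟩
    have h2 : 2 ≤ S.card := by
      have := one_lt_card.2 ⟨s1, hs1, s2, hs2, hss⟩
      omega
    omega
  have := hmax S' hsub hind'
  omega

theorem core (k : ℕ) : ∀ (A : Finset V) (a : ℕ), A.card ≤ k →
    (∀ I ⊆ A, indep H I → I.card ≤ a) →
    (ew H A).card + a ≤ A.card + 1 →
    ∃ P : Finset (Finset V), P.card ≤ a ∧ (∀ c ∈ P, H.IsClique (c : Set V)) ∧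
      ∀ v ∈ A, ∃ c ∈ P, v ∈ c := by
  induction k with
  | zero =>
    intro A a hA _ _
    have hA0 : A = ∅ := card_eq_zero.1 (Nat.le_zero.1 hA)
    subst hA0
    exact ⟨∅, by simp, by simp, by simp⟩
  | succ k ih =>
    intro A a hAk hα he
    obtain ⟨S, hSmem, hSmax⟩ := exists_max_image (A.powerset.filter (fun I => indep H I))
      Finset.card ⟨∅, mem_filter.2 ⟨empty_mem_powerset A, fun u hu => by simp at hu⟩⟩
    rw [mem_filter, mem_powerset] at hSmem
    obtain ⟨hSA, hSindep⟩ := hSmem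
    have hmax : ∀ I ⊆ A, indep H I → I.card ≤ S.card := fun I hI hind =>
      hSmax I (mem_filter.2 ⟨mem_powerset.2 hI, hind⟩)
    set T := A \ S with hT
    have hTS : ∀ x ∈ T, x ∉ S := fun x hx => (mem_sdiff.1 hx).2
    have hTA : T ⊆ A := sdiff_subset
    have hScard : S.card + T.card = A.card := by
      have h1 : T.card = A.card - S.card := by rw [hT]; exact card_sdiff_of_subset hSA
      have h2 := card_le_card hSA
      omega
    have hSa : S.card ≤ a := hα S hSA hSindep
    have hnb : ∀ t ∈ T, (S.filter (H.Adj t)).Nonempty := by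
      intro t ht
      by_contra hempty
      rw [not_nonempty_iff_eq_empty] at hempty
      have h1 : ∀ u ∈ S, ¬H.Adj t u := by
        intro u hu hadj
        have : u ∈ S.filter (H.Adj t) := mem_filter.2 ⟨hu, hadj⟩
        simp [hempty] at this
      have h2 : indep H (insert t S) := indep_insert hSindep h1
      have h3 : insert t S ⊆ A := insert_subset (hTA ht) hSA
      have h4 := hmax _ h3 h2
      rw [card_insert_of_notMem (hTS t ht)] at h4
      omega
    have hd1 : ∀ t ∈ T, 1 ≤ (S.filter (H.Adj t)).card := fun t ht => card_pos.2 (hnb t ht)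
    have hkey := key_count (H := H) S A hSA
    rw [← hT] at hkey
    set F : V → V := fun t =>
      if h : (S.filter (H.Adj t)).Nonempty then h.choose else t with hF
    have hFmem : ∀ t ∈ T, F t ∈ S.filter (H.Adj t) := by
      intro t ht
      rw [hF]
      simp only
      rw [dif_pos (hnb t ht)]
      exact (hnb t ht).choose_spec
    have hFS : ∀ t ∈ T, F t ∈ S := fun t ht => (mem_filter.1 (hFmem t ht)).1
    have hFadj : ∀ t ∈ T, H.Adj t (F t) := fun t ht => (mem_filter.1 (hFmem t ht)).2
    have hFuniq : ∀ t ∈ T, (S.filter (H.Adj t)).card = 1 → ∀ u ∈ S, H.Adj t u → u = F t := by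
      intro t ht hcard u hu hadj
      exact card_le_one.1 (le_of_eq hcard) u (mem_filter.2 ⟨hu, hadj⟩) _ (hFmem t ht)
    by_cases hD2 : ∃ t ∈ T, 2 ≤ (S.filter (H.Adj t)).card
    · -- CASE Y : a vertex with two neighbours in S
      obtain ⟨ts, hts, h2s⟩ := hD2
      have hT1 : 1 ≤ T.card := card_pos.2 ⟨ts, hts⟩
      have hsum1 : ∑ t ∈ T, (S.filter (H.Adj t)).card
          = (S.filter (H.Adj ts)).card + ∑ t ∈ T.erase ts, (S.filter (H.Adj t)).card :=
        (Finset.add_sum_erase T _ hts).symm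
      have hsum2 : (T.erase ts).card ≤ ∑ t ∈ T.erase ts, (S.filter (H.Adj t)).card := by
        have := Finset.card_nsmul_le_sum (T.erase ts) (fun t => (S.filter (H.Adj t)).card) 1
          (fun x hx => hd1 x (mem_of_mem_erase hx))
        simpa using this
      have hce : (T.erase ts).card = T.card - 1 := card_erase_of_mem hts
      have hbudget : (S.filter (H.Adj ts)).card = 2 ∧ (ew H T).card = 0 := by
        constructor <;> omega
      have hewT0 : ew H T = ∅ := card_eq_zero.1 hbudget.2
      have hnoTT : ∀ u ∈ T, ∀ v ∈ T, ¬H.Adj u v := by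
        intro u hu v hv hadj
        have : s(u, v) ∈ ew H T := mem_ew.2 ⟨hadj, hu, hv⟩
        simp [hewT0] at this
      have hdeg1 : ∀ t ∈ T, t ≠ ts → (S.filter (H.Adj t)).card = 1 := by
        intro t ht htne
        by_contra hne1
        have h2t : 2 ≤ (S.filter (H.Adj t)).card := by
          have := hd1 t ht
          omega
      -- derive a contradiction by counting
        have htm : t ∈ T.erase ts := mem_erase.2 ⟨htne, ht⟩
        have e2 : ∑ t' ∈ T.erase ts, (S.filter (H.Adj t')).card
            = (S.filter (H.Adj t)).card + ∑ t' ∈ (T.erase ts).erase t, (S.filter (H.Adj t')).card :=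
          (Finset.add_sum_erase _ _ htm).symm
        have e3 : ((T.erase ts).erase t).card
            ≤ ∑ t' ∈ (T.erase ts).erase t, (S.filter (H.Adj t')).card := by
          have := Finset.card_nsmul_le_sum ((T.erase ts).erase t)
            (fun t' => (S.filter (H.Adj t')).card) 1
            (fun x hx => hd1 x (mem_of_mem_erase (mem_of_mem_erase hx)))
          simpa using this
        have c2 : ((T.erase ts).erase t).card = (T.erase ts).card - 1 := card_erase_of_mem htm
        have hT2 : 2 ≤ T.card := one_lt_card.2 ⟨t, ht, ts, hts, htne⟩
        omega
      obtain ⟨s1, hs1f, s2, hs2f, hss⟩ := one_lt_card.1 (by omega : 1 < (S.filter (H.Adj ts)).card)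
      have hs1S : s1 ∈ S := (mem_filter.1 hs1f).1
      have hs2S : s2 ∈ S := (mem_filter.1 hs2f).1
      have hstars : ∀ u ∈ S, H.Adj ts u → u = s1 ∨ u = s2 := by
        intro u hu hadj
        have hsub : ({s1, s2} : Finset V) ⊆ S.filter (H.Adj ts) := by
          intro x hx
          rcases mem_insert.1 hx with h | h
          · subst h; exact hs1f
          · rw [mem_singleton.1 h]; exact hs2f
        have hcard2 : ({s1, s2} : Finset V).card = 2 := card_pair hss
        have heq : ({s1, s2} : Finset V) = S.filter (H.Adj ts) :=
          eq_of_subset_of_card_le hsub (by omega)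
        have : u ∈ ({s1, s2} : Finset V) := heq ▸ mem_filter.2 ⟨hu, hadj⟩
        simpa using this
      by_cases hcol : ∃ t1 ∈ T, ∃ t2 ∈ T, t1 ≠ t2 ∧ t1 ≠ ts ∧ t2 ≠ ts ∧ F t1 = F t2
      · obtain ⟨t1, ht1, t2, ht2, hne, hne1, hne2, hFeq⟩ := hcol
        exact absurd (swap1 A S hSA hSindep hmax ht1 ht2 hne (hFS t1 ht1)
          (hnoTT t1 ht1 t2 ht2)
          (hFuniq t1 ht1 (hdeg1 t1 ht1 hne1))
          (fun u hu ha => (hFuniq t2 ht2 (hdeg1 t2 ht2 hne2) u hu ha).trans hFeq.symm)) id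
      · push_neg at hcol
        by_cases hu2 : ∃ t ∈ T, t ≠ ts ∧ F t = s2
        · by_cases hu1 : ∃ t ∈ T, t ≠ ts ∧ F t = s1
          · obtain ⟨t1, ht1, hne1, hFt1⟩ := hu1
            obtain ⟨t2, ht2, hne2, hFt2⟩ := hu2
            have h12 : t1 ≠ t2 := by
              intro h
              rw [h, hFt2] at hFt1
              exact hss hFt1.symm
            exact absurd (swap2 A S hSA hSindep hmax ht1 ht2 hts h12 hne1 hne2 hs1S hs2S hss
              hnoTT
              (fun u hu ha => (hFuniq t1 ht1 (hdeg1 t1 ht1 hne1) u hu ha).trans hFt1)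
              (fun u hu ha => (hFuniq t2 ht2 (hdeg1 t2 ht2 hne2) u hu ha).trans hFt2)
              hstars) id
          · push_neg at hu1
            set g : V → V := fun t => if t = ts then s1 else F t with hg
            have hgval : ∀ t, t ≠ ts → g t = F t := by
              intro t ht; simp [hg, ht]
            have hgts : g ts = s1 := by simp [hg]
            have hg1 : ∀ t ∈ T, g t ∈ S := by
              intro t ht
              by_cases h : t = ts
              · subst h; rw [hgts]; exact hs1S
              · rw [hgval t h]; exact hFS t ht
            have hg2 : ∀ t ∈ T, H.Adj t (g t) := by
              intro t ht
              by_cases h : t = ts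
              · subst h; rw [hgts]; exact (mem_filter.1 hs1f).2
              · rw [hgval t h]; exact hFadj t ht
            have hg3 : ∀ t1 ∈ T, ∀ t2 ∈ T, g t1 = g t2 → t1 = t2 := by
              intro t1 ht1 t2 ht2 hgeq
              by_cases h1 : t1 = ts <;> by_cases h2 : t2 = ts
              · rw [h1, h2]
              · rw [h1, hgts] at hgeq
                rw [hgval t2 h2] at hgeq
                exact absurd hgeq.symm (hu1 t2 ht2 h2)
              · rw [h2, hgts] at hgeq
                rw [hgval t1 h1] at hgeq
                exact absurd hgeq (hu1 t1 ht1 h1)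
              · rw [hgval t1 h1, hgval t2 h2] at hgeq
                by_contra hnee
                exact hcol t1 ht1 t2 ht2 hnee h1 h2 hgeq
            obtain ⟨P, hP1, hP2, hP3⟩ := buildMatching (H := H) A S hSA g hg1 hg2 hg3
            exact ⟨P, hP1.trans hSa, hP2, hP3⟩
        · push_neg at hu2
          set g : V → V := fun t => if t = ts then s2 else F t with hg
          have hgval : ∀ t, t ≠ ts → g t = F t := by
            intro t ht; simp [hg, ht]
          have hgts : g ts = s2 := by simp [hg]
          have hg1 : ∀ t ∈ T, g t ∈ S := by
            intro t ht
            by_cases h : t = ts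
            · subst h; rw [hgts]; exact hs2S
            · rw [hgval t h]; exact hFS t ht
          have hg2 : ∀ t ∈ T, H.Adj t (g t) := by
            intro t ht
            by_cases h : t = ts
            · subst h; rw [hgts]; exact (mem_filter.1 hs2f).2
            · rw [hgval t h]; exact hFadj t ht
          have hg3 : ∀ t1 ∈ T, ∀ t2 ∈ T, g t1 = g t2 → t1 = t2 := by
            intro t1 ht1 t2 ht2 hgeq
            by_cases h1 : t1 = ts <;> by_cases h2 : t2 = ts
            · rw [h1, h2]
            · rw [h1, hgts] at hgeq
              rw [hgval t2 h2] at hgeq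
              exact absurd hgeq.symm (hu2 t2 ht2 h2)
            · rw [h2, hgts] at hgeq
              rw [hgval t1 h1] at hgeq
              exact absurd hgeq (hu2 t1 ht1 h1)
            · rw [hgval t1 h1, hgval t2 h2] at hgeq
              by_contra hnee
              exact hcol t1 ht1 t2 ht2 hnee h1 h2 hgeq
          obtain ⟨P, hP1, hP2, hP3⟩ := buildMatching (H := H) A S hSA g hg1 hg2 hg3
          exact ⟨P, hP1.trans hSa, hP2, hP3⟩
    · -- CASE X : every vertex of T has exactly one neighbour in S
      push_neg at hD2
      have hdeg1 : ∀ t ∈ T, (S.filter (H.Adj t)).card = 1 := by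
        intro t ht
        have h1 := hd1 t ht
        have h2 := hD2 t ht
        omega
      have hsumT : ∑ t ∈ T, (S.filter (H.Adj t)).card = T.card := by
        calc ∑ t ∈ T, (S.filter (H.Adj t)).card = ∑ _t ∈ T, 1 :=
              Finset.sum_congr rfl hdeg1
          _ = T.card := by simp
      have hewT1 : (ew H T).card ≤ 1 := by omega
      by_cases hinj : ∀ t1 ∈ T, ∀ t2 ∈ T, F t1 = F t2 → t1 = t2
      · obtain ⟨P, hP1, hP2, hP3⟩ := buildMatching (H := H) A S hSA F hFS hFadj hinj
        exact ⟨P, hP1.trans hSa, hP2, hP3⟩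
      · push_neg at hinj
        obtain ⟨t1, ht1, t2, ht2, hFeq, hne⟩ := hinj
        by_cases hadj : H.Adj t1 t2
        · -- triangle case, recurse
          have hsS : F t1 ∈ S := hFS t1 ht1
          have hadj1 : H.Adj t1 (F t1) := hFadj t1 ht1
          have hadj2 : H.Adj t2 (F t1) := hFeq ▸ hFadj t2 ht2
          have ht1s : t1 ≠ F t1 := fun h => hTS t1 ht1 (h ▸ hsS)
          have ht2s : t2 ≠ F t1 := fun h => hTS t2 ht2 (h ▸ hsS)
          have hTedge : ∀ u ∈ T, ∀ v ∈ T, H.Adj u v → s(u, v) = s(t1, t2) := by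
            intro u hu v hv huv
            exact card_le_one.1 hewT1 _ (mem_ew.2 ⟨huv, hu, hv⟩) _ (mem_ew.2 ⟨hadj, ht1, ht2⟩)
          set A' := A \ {t1, t2, F t1} with hA'
          have hA'sub : A' ⊆ A := sdiff_subset
          have htriA : ({t1, t2, F t1} : Finset V) ⊆ A := by
            intro x hx
            rcases mem_insert.1 hx with h | h
            · subst h; exact hTA ht1
            · rcases mem_insert.1 h with h' | h'
              · subst h'; exact hTA ht2
              · rw [mem_singleton.1 h']; exact hSA hsS
          have hcard3 : ({t1, t2, F t1} : Finset V).card = 3 := by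
            rw [card_insert_of_notMem, card_insert_of_notMem, card_singleton]
            · simp [ht2s]
            · intro h
              rcases mem_insert.1 h with h' | h'
              · exact hne h'
              · exact ht1s (mem_singleton.1 h')
          have hA'card : A'.card + 3 = A.card := by
            rw [hA', card_sdiff_of_subset htriA, hcard3]
            have := card_le_card htriA
            rw [hcard3] at this
            omega
          have ha1 : 1 ≤ a := le_trans (card_pos.2 ⟨F t1, hsS⟩) hSa
          have hα' : ∀ I ⊆ A', indep H I → I.card ≤ a - 1 := by
            intro I hI hind
            have ht1I : t1 ∉ I := by
              intro h
              exact (mem_sdiff.1 (hI h)).2 (mem_insert_self _ _)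
            have hins : indep H (insert t1 I) := by
              refine indep_insert hind ?_
              intro u hu hadj'
              have huA : u ∈ A := hA'sub (hI hu)
              have hunot : u ∉ ({t1, t2, F t1} : Finset V) := (mem_sdiff.1 (hI hu)).2
              by_cases huS : u ∈ S
              · have := hFuniq t1 ht1 (hdeg1 t1 ht1) u huS hadj'
                exact hunot (by rw [this]; simp)
              · have huT : u ∈ T := mem_sdiff.2 ⟨huA, huS⟩
                have heq := hTedge t1 ht1 u huT hadj'
                have : u = t2 := by
                  rcases Sym2.eq_iff.1 heq with ⟨-, h⟩ | ⟨h1, h2⟩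
                  · exact h
                  · exact absurd h1 hne
                exact hunot (by rw [this]; simp)
            have h5 := hα (insert t1 I) (insert_subset (hTA ht1) (hI.trans hA'sub)) hins
            rw [card_insert_of_notMem ht1I] at h5
            omega
          have hedges : (ew H A').card + 3 ≤ (ew H A).card := by
            have he1 : s(t1, F t1) ∈ ew H A := mem_ew.2 ⟨hadj1, hTA ht1, hSA hsS⟩
            have he2 : s(t2, F t1) ∈ ew H A := mem_ew.2 ⟨hadj2, hTA ht2, hSA hsS⟩
            have he3 : s(t1, t2) ∈ ew H A := mem_ew.2 ⟨hadj, hTA ht1, hTA ht2⟩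
            have hnotin : ∀ x y : V, x ∈ ({t1, t2, F t1} : Finset V) → s(x, y) ∉ ew H A' := by
              intro x y hx hmem
              exact (mem_sdiff.1 (mem_ew.1 hmem).2.1).2 hx
            have hne12 : s(t1, F t1) ≠ s(t2, F t1) := by
              intro h
              rcases Sym2.eq_iff.1 h with ⟨h', -⟩ | ⟨h1, h2⟩
              · exact hne h'
              · exact ht1s h1
            have hne13 : s(t1, F t1) ≠ s(t1, t2) := by
              intro h
              rcases Sym2.eq_iff.1 h with ⟨-, h'⟩ | ⟨h1, h2⟩
              · exact ht2s h'.symm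
              · exact hne h1
            have hne23 : s(t2, F t1) ≠ s(t1, t2) := by
              intro h
              rcases Sym2.eq_iff.1 h with ⟨h', -⟩ | ⟨h1, h2⟩
              · exact hne h'.symm
              · exact ht1s h2.symm
            have hsub : insert s(t1, F t1) (insert s(t2, F t1) (insert s(t1, t2) (ew H A')))
                ⊆ ew H A := by
              intro e he'
              rcases mem_insert.1 he' with h | h
              · subst h; exact he1
              · rcases mem_insert.1 h with h' | h'
                · subst h'; exact he2
                · rcases mem_insert.1 h' with h'' | h''
                  · subst h''; exact he3
                  · exact ew_mono hA'sub h''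
            have hm3 : s(t1, t2) ∉ ew H A' := hnotin t1 t2 (by simp)
            have hm2 : s(t2, F t1) ∉ insert s(t1, t2) (ew H A') := by
              intro h
              rcases mem_insert.1 h with h' | h'
              · exact hne23 h'
              · exact hnotin t2 (F t1) (by simp) h'
            have hm1 : s(t1, F t1) ∉ insert s(t2, F t1) (insert s(t1, t2) (ew H A')) := by
              intro h
              rcases mem_insert.1 h with h' | h'
              · exact hne12 h'
              · rcases mem_insert.1 h' with h'' | h''
                · exact hne13 h''
                · exact hnotin t1 (F t1) (by simp) h''
            have hcardins : (insert s(t1, F t1) (insert s(t2, F t1)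
                (insert s(t1, t2) (ew H A')))).card = (ew H A').card + 3 := by
              rw [card_insert_of_notMem hm1, card_insert_of_notMem hm2,
                card_insert_of_notMem hm3]
            calc (ew H A').card + 3 = _ := hcardins.symm
              _ ≤ (ew H A).card := card_le_card hsub
          have hk' : A'.card ≤ k := by omega
          have he' : (ew H A').card + (a - 1) ≤ A'.card + 1 := by omega
          obtain ⟨P', hP1, hP2, hP3⟩ := ih A' (a - 1) hk' hα' he'
          refine ⟨insert {t1, t2, F t1} P', ?_, ?_, ?_⟩
          · calc (insert {t1, t2, F t1} P').card ≤ P'.card + 1 := card_insert_le _ _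
              _ ≤ a := by omega
          · intro c hc
            rcases mem_insert.1 hc with h | h
            · subst h
              rw [coe_insert, coe_insert, coe_singleton]
              refine SimpleGraph.IsClique.insert (SimpleGraph.IsClique.insert ?_ ?_) ?_
              · exact Set.pairwise_singleton _ _
              · intro b hb _
                rw [Set.mem_singleton_iff.1 hb]
                exact hadj2
              · intro b hb hneb
                rcases hb with h' | h'
                · rw [h']; exact hadj
                · rw [Set.mem_singleton_iff.1 h']; exact hadj1
            · exact hP2 c h
          · intro v hv
            by_cases hv3 : v ∈ ({t1, t2, F t1} : Finset V)
            · exact ⟨{t1, t2, F t1}, mem_insert_self _ _, hv3⟩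
            · obtain ⟨c, hc, hvc⟩ := hP3 v (mem_sdiff.2 ⟨hv, hv3⟩)
              exact ⟨c, mem_insert_of_mem hc, hvc⟩
        · -- no edge between the colliding pair : contradiction
          exact absurd (swap1 A S hSA hSindep hmax ht1 ht2 hne (hFS t1 ht1) hadj
            (hFuniq t1 ht1 (hdeg1 t1 ht1))
            (fun u hu ha => (hFuniq t2 ht2 (hdeg1 t2 ht2) u hu ha).trans hFeq.symm)) id

end TuranNE

namespace TuranNE2

lemma ncard_eq {V : Type*} [Fintype V] (G : SimpleGraph V) [Fintype G.edgeSet] :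
    G.edgeSet.ncard = #G.edgeFinset := by
  rw [Set.ncard_eq_toFinset_card', SimpleGraph.edgeFinset]

lemma sum_compl {V : Type*} [Fintype V] [DecidableEq V] (G : SimpleGraph V) :
    G.edgeSet.ncard + Gᶜ.edgeSet.ncard = (Fintype.card V).choose 2 := by
  classical
  rw [ncard_eq G, ncard_eq Gᶜ]
  have hd : Disjoint G.edgeFinset Gᶜ.edgeFinset := by
    rw [Finset.disjoint_left]
    intro e he1 he2
    induction e using Sym2.ind with
    | _ x y =>
      rw [SimpleGraph.mem_edgeFinset, SimpleGraph.mem_edgeSet] at he1 he2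
      exact he2.2 he1
  have hu : G.edgeFinset ∪ Gᶜ.edgeFinset = (⊤ : SimpleGraph V).edgeFinset := by
    ext e
    induction e using Sym2.ind with
    | _ x y =>
      simp only [Finset.mem_union, SimpleGraph.mem_edgeFinset, SimpleGraph.mem_edgeSet,
        SimpleGraph.compl_adj, SimpleGraph.top_adj]
      constructor
      · rintro (h | h)
        · exact h.ne
        · exact h.1
      · intro h
        by_cases hadj : G.Adj x y
        · exact Or.inl hadj
        · exact Or.inr ⟨h, hadj⟩
  rw [← SimpleGraph.card_edgeFinset_top_eq_card_choose_two, ← hu,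
    card_union_of_disjoint hd]

lemma compl_turan_card (n r : ℕ) (hr : 0 < r) (h2 : n ≤ 2 * r) :
    ((SimpleGraph.turanGraph n r)ᶜ.edgeSet).ncard ≤ n - r := by
  classical
  rw [ncard_eq]
  have hstep : ∀ x y : Fin n, (SimpleGraph.turanGraph n r)ᶜ.Adj x y → (x : ℕ) < (y : ℕ) →
      (y : ℕ) = (x : ℕ) + r := by
    intro x y hxy hlt
    have hmod : (x : ℕ) % r = (y : ℕ) % r := by
      have h := hxy.2
      simp only [SimpleGraph.turanGraph, not_not] at h
      exact h
    have hdvd : r ∣ (y : ℕ) - (x : ℕ) := (Nat.modEq_iff_dvd' hlt.le).1 hmod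
    obtain ⟨c, hc⟩ := hdvd
    have hy : (y : ℕ) < n := y.2
    have hc1 : 1 ≤ c := by
      rcases Nat.eq_zero_or_pos c with h | h
      · subst h; omega
      · exact h
    have hc2 : c < 2 := by
      by_contra h
      push_neg at h
      have : r * 2 ≤ r * c := Nat.mul_le_mul_left r h
      omega
    have : c = 1 := by omega
    subst this
    omega
  set f : Sym2 (Fin n) → ℕ := Sym2.lift ⟨fun x y => min (x : ℕ) (y : ℕ), by
    intro x y; simp [min_comm]⟩ with hf
  have hfval : ∀ x y : Fin n, f s(x, y) = min (x : ℕ) (y : ℕ) := fun x y => rfl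
  have hchar : ∀ x y : Fin n, (SimpleGraph.turanGraph n r)ᶜ.Adj x y →
      ((x : ℕ) = f s(x, y) ∧ (y : ℕ) = f s(x, y) + r) ∨
      ((y : ℕ) = f s(x, y) ∧ (x : ℕ) = f s(x, y) + r) := by
    intro x y hxy
    rcases lt_trichotomy (x : ℕ) (y : ℕ) with h | h | h
    · left
      have := hstep x y hxy h
      rw [hfval]
      omega
    · exact absurd (Fin.ext h) hxy.1
    · right
      have := hstep y x hxy.symm h
      rw [hfval]
      omega
  rw [show n - r = #(Finset.range (n - r)) from (card_range _).symm]
  apply Finset.card_le_card_of_injOn f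
  · intro e he
    rw [Finset.mem_coe, Finset.mem_range]
    induction e using Sym2.ind with
    | _ x y =>
      rw [Finset.mem_coe, SimpleGraph.mem_edgeFinset, SimpleGraph.mem_edgeSet] at he
      have hy : (y : ℕ) < n := y.2
      have hx : (x : ℕ) < n := x.2
      rcases hchar x y he with ⟨h1, h2⟩ | ⟨h1, h2⟩ <;> omega
  · intro e1 he1 e2 he2 heq
    simp only [Finset.mem_coe, SimpleGraph.mem_edgeFinset, SimpleGraph.mem_edgeSet] at he1 he2
    induction e1 using Sym2.ind with
    | _ x y =>
      induction e2 using Sym2.ind with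
      | _ z w =>
        rcases hchar x y he1 with ⟨h1, h2⟩ | ⟨h1, h2⟩ <;>
          rcases hchar z w he2 with ⟨h3, h4⟩ | ⟨h3, h4⟩ <;>
          rw [Sym2.eq_iff]
        · left; constructor <;> apply Fin.ext <;> omega
        · right; constructor <;> apply Fin.ext <;> omega
        · right; constructor <;> apply Fin.ext <;> omega
        · left; constructor <;> apply Fin.ext <;> omega

end TuranNE2

/-- Number of edges of the Turán graph `T(n,r)`. -/
noncomputable def turanEdges (n r : ℕ) : ℕ := (SimpleGraph.turanGraph n r).edgeSet.ncard

theorem turan_near_extremal_colorable_small (n r : ℕ) (hr : 2 ≤ r)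
    (h1 : r + 3 ≤ n) (h2 : n ≤ 2 * r)
    (G : SimpleGraph (Fin n)) (hfree : G.CliqueFree (r + 1))
    (he : turanEdges n r - 1 ≤ G.edgeSet.ncard) :
    G.Colorable r := by
  classical
  have hα : ∀ I : Finset (Fin n), I ⊆ Finset.univ → TuranNE.indep Gᶜ I → I.card ≤ r := by
    intro I _ hind
    by_contra hlt
    push_neg at hlt
    obtain ⟨J, hJI, hJcard⟩ := Finset.exists_subset_card_eq (show r + 1 ≤ I.card by omega)
    refine hfree J ⟨?_, hJcard⟩
    intro u hu v hv huv
    have h := hind u (hJI hu) v (hJI hv)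
    rw [SimpleGraph.compl_adj] at h
    by_contra hGadj
    exact h ⟨huv, hGadj⟩
  have hsumG := TuranNE2.sum_compl G
  have hsumT := TuranNE2.sum_compl (SimpleGraph.turanGraph n r)
  have hcomplT := TuranNE2.compl_turan_card n r (by omega) h2
  have hncard := TuranNE2.ncard_eq Gᶜ
  have hrn : r ≤ n := by omega
  have hcardfin : Fintype.card (Fin n) = n := Fintype.card_fin n
  rw [hcardfin] at hsumG hsumT
  have hTe : turanEdges n r = (SimpleGraph.turanGraph n r).edgeSet.ncard := rfl
  have hGc : #Gᶜ.edgeFinset + r ≤ n + 1 := by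
    rw [← hncard]
    omega
  have hew : TuranNE.ew Gᶜ Finset.univ = Gᶜ.edgeFinset := by
    rw [TuranNE.ew]
    ext e
    simp only [Finset.mem_filter, SimpleGraph.mem_edgeFinset]
    exact ⟨fun h => h.1, fun h => ⟨h, fun v _ => Finset.mem_univ v⟩⟩
  have hcards : (Finset.univ : Finset (Fin n)).card = n := by simp
  obtain ⟨P, hP1, hP2, hP3⟩ := TuranNE.core (H := Gᶜ) n Finset.univ r (by simp) hα
    (by rw [hew, hcards]; exact hGc)
  have hcov : ∀ v : Fin n, ∃ c ∈ P, v ∈ c := fun v => hP3 v (Finset.mem_univ v)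
  choose f hf1 hf2 using hcov
  have hcol : ∀ {u v : Fin n}, G.Adj u v → f u ≠ f v := by
    intro u v huv heq
    have hclique := hP2 (f u) (hf1 u)
    have hvmem : v ∈ f u := heq ▸ hf2 v
    have hadj : Gᶜ.Adj u v :=
      hclique (Finset.mem_coe.2 (hf2 u)) (Finset.mem_coe.2 hvmem) huv.ne
    exact hadj.2 huv
  let C : G.Coloring {c // c ∈ P} :=
    SimpleGraph.Coloring.mk (fun v => ⟨f v, hf1 v⟩)
      (fun {u v} huv => by simpa using hcol huv)
  have hcolorable := C.colorable
  rw [Fintype.card_coe] at hcolorable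
  exact hcolorable.mono hP1
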